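/- Cyclic-interval rounding: let C₁, …, C_k be objects with weights x₁, …, x_k ≥ 0 arranged in cyclic order so that for every 'conflict point' z, the set of indices i with z ∈ C_i forms a cyclic interval, and let X = Σ x_i. Then for ℓ = max{1, ⌊X⌋} there exists an offset p ∈ [0, X) such that the ℓ objects selected by the rule 'C_i is selected iff Σ_{j<i} x_j ≤ (p + t) mod X < Σ_{j≤i} x_j for some t ∈ {0,…,ℓ−1}' are pairwise disjoint and, for the best offset, the selected set has weight (with weights w_i ≥ 0) at least (ℓ/X) Σ w_i x_i > (1/2) Σ w_i x_i. -/

import Mathlib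

open Finset MeasureTheory

/-- The residue of `y` modulo the circumference `X` (representative in `[0, X)`). -/
noncomputable def cyclicMod (X y : ℝ) : ℝ := y - X * ⌊y / X⌋

section helpers
variable {X : ℝ}

lemma cyclicMod_nonneg (hX : 0 < X) (y : ℝ) : 0 ≤ cyclicMod X y := by
  have h := mul_le_mul_of_nonneg_right (Int.floor_le (y / X)) hX.le
  rw [div_mul_cancel₀ y hX.ne'] at h
  unfold cyclicMod; nlinarith

lemma cyclicMod_lt (hX : 0 < X) (y : ℝ) : cyclicMod X y < X := by
  have h := mul_lt_mul_of_pos_right (Int.lt_floor_add_one (y / X)) hX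
  rw [div_mul_cancel₀ y hX.ne'] at h
  unfold cyclicMod; nlinarith

lemma cyclicMod_periodic (hX : 0 < X) : Function.Periodic (cyclicMod X) X := by
  intro y
  unfold cyclicMod
  have h : (y + X) / X = y / X + 1 := by field_simp
  rw [h, Int.floor_add_one]
  push_cast
  ring

lemma cyclicMod_sub (X : ℝ) (p : ℝ) (t t' : ℕ) :
    cyclicMod X (p + t) - cyclicMod X (p + t') =
      ((t : ℝ) - t') + ((⌊(p + t') / X⌋ - ⌊(p + t) / X⌋ : ℤ) : ℝ) * X := by
  unfold cyclicMod
  push_cast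
  ring

lemma key_int (hXpos : 0 < X) {ℓ : ℕ} (hℓ : ℓ = max 1 ⌊X⌋₊)
    {t t' : ℕ} (ht : t < ℓ) (ht' : t' < ℓ) (m : ℤ)
    (h : |((t : ℝ) - t') + (m : ℝ) * X| < 1) : t = t' := by
  by_contra hne
  have hℓ2 : 2 ≤ ℓ := by omega
  have hfl : ℓ = ⌊X⌋₊ := by omega
  have hℓX : (ℓ : ℝ) ≤ X := by rw [hfl]; exact Nat.floor_le hXpos.le
  set d : ℤ := (t : ℤ) - t' with hd
  have hdcast : ((d : ℝ)) = (t : ℝ) - t' := by rw [hd]; push_cast; ring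
  have hd0 : d ≠ 0 := by omega
  have habs1 : (1 : ℤ) ≤ |d| := Int.one_le_abs hd0
  have habs2 : |d| ≤ (ℓ : ℤ) - 1 := by rw [abs_le]; omega
  have hd1 : (1:ℝ) ≤ |((t:ℝ) - t')| := by
    rw [← hdcast, ← Int.cast_abs]; exact_mod_cast habs1
  have hd2 : |((t:ℝ) - t')| ≤ (ℓ:ℝ) - 1 := by
    rw [← hdcast, ← Int.cast_abs]
    have h2 : ((|d| : ℤ) : ℝ) ≤ (((ℓ : ℤ) - 1 : ℤ) : ℝ) := by exact_mod_cast habs2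
    push_cast at h2 ⊢
    linarith
  rcases eq_or_ne m 0 with rfl | hm
  · rw [Int.cast_zero, zero_mul, add_zero] at h
    linarith
  · have hm1 : (1:ℝ) ≤ |(m:ℝ)| := by rw [← Int.cast_abs]; exact_mod_cast Int.one_le_abs hm
    have hmX : X ≤ |(m : ℝ) * X| := by rw [abs_mul, abs_of_pos hXpos]; nlinarith
    have htri : |(m:ℝ) * X| - |((t:ℝ) - t')| ≤ |((t:ℝ) - t') + (m:ℝ) * X| := by
      have h1 := abs_sub_abs_le_abs_sub ((m:ℝ) * X) (-((t:ℝ) - t'))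
      rw [abs_neg, sub_neg_eq_add, add_comm] at h1
      exact h1
    linarith

end helpers

/-- Cyclic-interval rounding: objects `i : Fin k` with lengths `x i ∈ [0,1]` partition a
circle of circumference `X = ∑ x i > 0` into cyclic intervals `[S i, S i + x i)`; any
conflict point `z` is contained (`mem z i`) only in objects whose intervals fit into a
common cyclic window of length `1`. With `ℓ = max{1, ⌊X⌋}`, there is an offset
`p ∈ [0, X)` such that the objects selected by the rule "`i` is selected iff
`S i ≤ (p + t) mod X < S i + x i` for some `t ∈ {0, …, ℓ-1}`" are pairwise conflict-free,
`ℓ/X > 1/2`, and the selected set has weight at least `(ℓ/X) · ∑ w i · x i`. -/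
theorem cyclic_interval_rounding (k : ℕ) (x w : Fin k → ℝ)
    (hx0 : ∀ i, 0 ≤ x i) (hx1 : ∀ i, x i ≤ 1) (hw : ∀ i, 0 ≤ w i)
    (X : ℝ) (hX : X = ∑ i, x i) (hXpos : 0 < X)
    (ℓ : ℕ) (hℓ : ℓ = max 1 ⌊X⌋₊)
    (S : Fin k → ℝ)
    (hS : ∀ i : Fin k, S i = ∑ j ∈ Finset.univ.filter (fun j => j < i), x j)
    (Z : Type*) (mem : Z → Fin k → Prop)
    (hinterval : ∀ z : Z, ∃ a : ℝ, ∀ i, mem z i →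
      ∀ y : ℝ, S i ≤ y → y < S i + x i →
        ∃ n : ℤ, a ≤ y + n * X ∧ y + n * X < a + 1) :
    ∃ (p : ℝ) (sel : Finset (Fin k)),
      0 ≤ p ∧ p < X ∧
      (∀ i : Fin k, i ∈ sel ↔ ∃ t ∈ Finset.range ℓ,
        S i ≤ cyclicMod X (p + (t : ℝ)) ∧ cyclicMod X (p + (t : ℝ)) < S i + x i) ∧
      (∀ i ∈ sel, ∀ j ∈ sel, i ≠ j → ∀ z : Z, ¬(mem z i ∧ mem z j)) ∧
      (1 / 2 : ℝ) < (ℓ : ℝ) / X ∧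
      (ℓ : ℝ) / X * ∑ i, w i * x i ≤ ∑ i ∈ sel, w i := by
  classical
  have hk : k ≠ 0 := by
    rintro rfl
    rw [hX] at hXpos
    simp at hXpos
  -- prefix sum basics
  have hS0 : ∀ i, 0 ≤ S i := fun i => by
    rw [hS]; exact Finset.sum_nonneg fun j _ => hx0 j
  have hSX : ∀ i : Fin k, S i + x i ≤ X := by
    intro i
    rw [hS, hX, add_comm]
    have hni : i ∉ univ.filter (fun j => j < i) := by simp
    rw [← Finset.sum_insert hni]
    exact Finset.sum_le_sum_of_subset_of_nonneg (Finset.subset_univ _) fun j _ _ => hx0 j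
  have hmono : ∀ i j : Fin k, i < j → S i + x i ≤ S j := by
    intro i j hij
    rw [hS i, hS j, add_comm]
    have hni : i ∉ univ.filter (fun m => m < i) := by simp
    rw [← Finset.sum_insert hni]
    refine Finset.sum_le_sum_of_subset_of_nonneg ?_ fun m _ _ => hx0 m
    intro m hm
    simp only [Finset.mem_insert, Finset.mem_filter, Finset.mem_univ, true_and] at hm ⊢
    rcases hm with rfl | hm
    · exact hij
    · exact hm.trans hij
  have hdisj : ∀ i j : Fin k, i ≠ j → ∀ q : ℝ,
      S i ≤ q → q < S i + x i → S j ≤ q → q < S j + x j → False := by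
    intro i j hij q h1 h2 h3 h4
    rcases lt_or_gt_of_ne hij with h | h
    · have := hmono i j h; linarith
    · have := hmono j i h; linarith
  have hexists : ∀ q : ℝ, 0 ≤ q → q < X → ∃ i : Fin k, S i ≤ q ∧ q < S i + x i := by
    intro q hq0 hqX
    obtain ⟨n, rfl⟩ : ∃ n, k = n + 1 := ⟨k - 1, by omega⟩
    have hlast : S (Fin.last n) + x (Fin.last n) = X := by
      rw [hS, hX, add_comm,
        ← Finset.sum_insert (by simp : Fin.last n ∉ univ.filter (fun j => j < Fin.last n))]
      congr 1
      ext j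
      simp only [Finset.mem_insert, Finset.mem_filter, Finset.mem_univ, true_and,
        Fin.lt_last_iff_ne_last, iff_true]
      tauto
    set A := univ.filter (fun i : Fin (n + 1) => q < S i + x i) with hA
    have hAlast : Fin.last n ∈ A := by
      rw [hA, Finset.mem_filter]
      refine ⟨Finset.mem_univ _, ?_⟩
      rw [hlast]
      exact hqX
    have hAne : A.Nonempty := ⟨_, hAlast⟩
    set i := A.min' hAne with hi
    have hiA : i ∈ A := A.min'_mem hAne
    have hqi : q < S i + x i := by
      rw [hA] at hiA
      exact (Finset.mem_filter.1 hiA).2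
    refine ⟨i, ?_, hqi⟩
    rcases Nat.eq_zero_or_pos i.val with h0 | hpos
    · have : univ.filter (fun j => j < i) = (∅ : Finset (Fin (n + 1))) := by
        ext j
        simp only [Finset.mem_filter, Finset.mem_univ, true_and, Finset.notMem_empty,
          iff_false, Fin.lt_def, h0]
        omega
      rw [hS, this, Finset.sum_empty]
      exact hq0
    · set j : Fin (n + 1) := ⟨i.val - 1, by omega⟩ with hj
      have hval : i.val = j.val + 1 := by rw [hj]; simp; omega
      have hji : j < i := by rw [Fin.lt_def]; omega
      have hjA : j ∉ A := by
        intro hjA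
        exact absurd (A.min'_le j hjA) (not_le.2 hji)
      have hjq : S j + x j ≤ q := by
        rw [hA] at hjA
        simp only [Finset.mem_filter, Finset.mem_univ, true_and, not_lt] at hjA
        exact hjA
      have hSi : S i = S j + x j := by
        rw [hS i, hS j, add_comm (∑ m ∈ univ.filter (fun m => m < j), x m),
          ← Finset.sum_insert (by simp : j ∉ univ.filter (fun m => m < j))]
        congr 1
        ext m
        simp only [Finset.mem_filter, Finset.mem_univ, true_and, Finset.mem_insert,
          Fin.lt_def, Fin.ext_iff]
        omega
      rw [hSi]
      exact hjq
  -- same interval implies same shift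
  have hsame : ∀ (p : ℝ) (t t' : ℕ), t < ℓ → t' < ℓ → ∀ i : Fin k,
      S i ≤ cyclicMod X (p + t) → cyclicMod X (p + t) < S i + x i →
      S i ≤ cyclicMod X (p + t') → cyclicMod X (p + t') < S i + x i → t = t' := by
    intro p t t' ht ht' i h1 h2 h3 h4
    have hdiff := cyclicMod_sub X p t t'
    have habs : |((t:ℝ) - t') + ((⌊(p + t') / X⌋ - ⌊(p + t) / X⌋ : ℤ) : ℝ) * X| < 1 := by
      rw [← sub_eq_iff_eq_add'] at hdiff
      rw [abs_lt]
      constructor <;> nlinarith [hx1 i, hdiff]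
    exact key_int hXpos hℓ ht ht' _ habs
  -- conflict-freeness for any offset
  have hconf : ∀ (p : ℝ) (i j : Fin k),
      (∃ t ∈ Finset.range ℓ, S i ≤ cyclicMod X (p + t) ∧ cyclicMod X (p + t) < S i + x i) →
      (∃ t ∈ Finset.range ℓ, S j ≤ cyclicMod X (p + t) ∧ cyclicMod X (p + t) < S j + x j) →
      i ≠ j → ∀ z : Z, ¬(mem z i ∧ mem z j) := by
    rintro p i j ⟨ti, hti, h1i, h2i⟩ ⟨tj, htj, h1j, h2j⟩ hij z ⟨hzi, hzj⟩
    obtain ⟨a, ha⟩ := hinterval z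
    obtain ⟨ni, hni1, hni2⟩ := ha i hzi _ h1i h2i
    obtain ⟨nj, hnj1, hnj2⟩ := ha j hzj _ h1j h2j
    have hdiff := cyclicMod_sub X p ti tj
    have heq : ti = tj := by
      refine key_int hXpos hℓ (Finset.mem_range.1 hti) (Finset.mem_range.1 htj)
        (⌊(p + tj) / X⌋ - ⌊(p + ti) / X⌋ + ni - nj) ?_
      rw [abs_lt]
      push_cast
      push_cast at hdiff
      constructor <;> nlinarith [hni1, hni2, hnj1, hnj2, hdiff]
    subst heq
    exact hdisj i j hij _ h1i h2i h1j h2j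
  -- the step function g
  set g : ℝ → ℝ := fun y => ∑ i : Fin k,
    Set.indicator (Set.Ico (S i) (S i + x i)) (fun _ => w i) y with hg
  have hgval : ∀ (y : ℝ) (i : Fin k), S i ≤ y → y < S i + x i → g y = w i := by
    intro y i h1 h2
    rw [hg]
    dsimp only
    rw [Finset.sum_eq_single i]
    · exact Set.indicator_of_mem (Set.mem_Ico.mpr ⟨h1, h2⟩) _
    · intro j _ hji
      refine Set.indicator_of_notMem ?_ _
      intro hmem
      exact hdisj j i hji y hmem.1 hmem.2 h1 h2
    · intro hi
      exact absurd (Finset.mem_univ i) hi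
  set B : ℝ := ∑ i : Fin k, w i with hB
  have hg0 : ∀ y, 0 ≤ g y := fun y =>
    Finset.sum_nonneg fun i _ => Set.indicator_nonneg (fun _ _ => hw i) _
  have hgB : ∀ y, g y ≤ B := by
    intro y
    rw [hg, hB]
    dsimp only
    refine Finset.sum_le_sum fun i _ => ?_
    by_cases h : y ∈ Set.Ico (S i) (S i + x i)
    · rw [Set.indicator_of_mem h]
    · rw [Set.indicator_of_notMem h]; exact hw i
  -- the weight function F
  set F : ℝ → ℝ := fun p => ∑ t ∈ Finset.range ℓ, g (cyclicMod X (p + t)) with hF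
  have hFle : ∀ p : ℝ, F p ≤ ∑ i ∈ univ.filter (fun i : Fin k => ∃ t ∈ Finset.range ℓ,
      S i ≤ cyclicMod X (p + t) ∧ cyclicMod X (p + t) < S i + x i), w i := by
    intro p
    have hι : ∀ t : ℕ, ∃ i : Fin k,
        S i ≤ cyclicMod X (p + t) ∧ cyclicMod X (p + t) < S i + x i := fun t =>
      hexists _ (cyclicMod_nonneg hXpos _) (cyclicMod_lt hXpos _)
    choose ι hι1 hι2 using hι
    have hFval : F p = ∑ t ∈ Finset.range ℓ, w (ι t) := by
      rw [hF]
      dsimp only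
      exact Finset.sum_congr rfl fun t _ => hgval _ _ (hι1 t) (hι2 t)
    rw [hFval]
    have hinj : ∀ t ∈ Finset.range ℓ, ∀ t' ∈ Finset.range ℓ, ι t = ι t' → t = t' := by
      intro t ht t' ht' he
      refine hsame p t t' (Finset.mem_range.1 ht) (Finset.mem_range.1 ht') (ι t)
        (hι1 t) (hι2 t) ?_ ?_
      · rw [he]; exact hι1 t'
      · rw [he]; exact hι2 t'
    rw [← Finset.sum_image hinj]
    refine Finset.sum_le_sum_of_subset_of_nonneg ?_ fun i _ _ => hw i
    intro i hi
    obtain ⟨t, ht, rfl⟩ := Finset.mem_image.1 hi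
    rw [Finset.mem_filter]
    exact ⟨Finset.mem_univ _, t, ht, hι1 t, hι2 t⟩
  -- measurability
  have hgm : Measurable g := by
    rw [hg]
    exact Finset.measurable_sum _ fun i _ =>
      Measurable.indicator measurable_const measurableSet_Ico
  have hcm : Measurable (cyclicMod X) := by
    have h1 : Measurable fun y : ℝ => ((⌊y / X⌋ : ℤ) : ℝ) :=
      (continuous_of_discreteTopology.measurable).comp
        (Int.measurable_floor.comp (measurable_id.div_const X))
    exact measurable_id.sub (measurable_const.mul h1)
  have hFm : Measurable F := by
    rw [hF]
    exact Finset.measurable_sum _ fun t _ =>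
      (hgm.comp hcm).comp (measurable_id.add_const _)
  -- integrability helper
  have integ : ∀ (f : ℝ → ℝ) (C : ℝ), Measurable f → (∀ y, 0 ≤ f y) → (∀ y, f y ≤ C) →
      ∀ s : Set ℝ, volume s ≠ ⊤ → IntegrableOn f s := by
    intro f C hf h0 h1 s hs
    exact Measure.integrableOn_of_bounded hs hf.aestronglyMeasurable
      (ae_of_all _ fun y => by
        rw [Real.norm_eq_abs, abs_of_nonneg (h0 y)]
        exact h1 y)
  -- integral of g over [0, X]
  have hint_g : ∫ y, g y = ∑ i, w i * x i := by
    rw [hg]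
    rw [integral_finset_sum _ (fun i _ => (integrable_indicator_iff measurableSet_Ico).2
      (integrableOn_const measure_Ico_lt_top.ne))]
    refine Finset.sum_congr rfl fun i _ => ?_
    rw [integral_indicator_const _ measurableSet_Ico,
      Real.volume_real_Ico_of_le (by linarith [hx0 i] : S i ≤ S i + x i), smul_eq_mul]
    ring
  have hIoo : ∫ y in Set.Ioo (0:ℝ) X, g y = ∑ i, w i * x i := by
    rw [setIntegral_eq_integral_of_ae_compl_eq_zero, hint_g]
    have h0 : ∀ᵐ y : ℝ ∂volume, y ≠ 0 := by
      rw [ae_iff]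
      have he : {y : ℝ | ¬ y ≠ 0} = {0} := by ext y; simp
      rw [he]
      exact measure_singleton 0
    filter_upwards [h0] with y hy hyn
    rw [hg]
    dsimp only
    refine Finset.sum_eq_zero fun i _ => ?_
    refine Set.indicator_of_notMem ?_ _
    rintro ⟨ha, hb⟩
    have hy0 : 0 ≤ y := le_trans (hS0 i) ha
    have hyX : y < X := lt_of_lt_of_le hb (hSX i)
    have : ¬ (0 < y) := fun hlt => hyn ⟨hlt, hyX⟩
    exact hy (le_antisymm (not_lt.1 this) hy0)
  have hcircInt : ∫ y in (0:ℝ)..X, g (cyclicMod X y) = ∑ i, w i * x i := by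
    rw [intervalIntegral.integral_of_le hXpos.le, integral_Ioc_eq_integral_Ioo,
      setIntegral_congr_fun measurableSet_Ioo (fun y hy => ?_), hIoo]
    have h1 : ⌊y / X⌋ = 0 := by
      rw [Int.floor_eq_zero_iff]
      exact ⟨div_nonneg hy.1.le hXpos.le, (div_lt_one hXpos).2 hy.2⟩
    show g (cyclicMod X y) = g y
    unfold cyclicMod
    rw [h1]
    norm_num
  have huIoc : volume (Set.uIoc (0:ℝ) X) ≠ ⊤ := measure_Ioc_lt_top.ne
  have hIntShift : ∀ t : ℕ, ∫ p in (0:ℝ)..X, g (cyclicMod X (p + t)) = ∑ i, w i * x i := by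
    intro t
    have hper : Function.Periodic (fun y => g (cyclicMod X y)) X := fun y => by
      show g (cyclicMod X (y + X)) = g (cyclicMod X y)
      rw [cyclicMod_periodic hXpos y]
    calc ∫ p in (0:ℝ)..X, g (cyclicMod X (p + t))
        = ∫ y in (0 + (t:ℝ))..(X + (t:ℝ)), g (cyclicMod X y) :=
          intervalIntegral.integral_comp_add_right (fun y => g (cyclicMod X y)) (t:ℝ)
      _ = ∫ y in (t:ℝ)..((t:ℝ) + X), g (cyclicMod X y) := by rw [zero_add, add_comm X]
      _ = ∫ y in (0:ℝ)..(0 + X), g (cyclicMod X y) := hper.intervalIntegral_add_eq _ _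
      _ = ∑ i, w i * x i := by rw [zero_add]; exact hcircInt
  have hFint : ∫ p in (0:ℝ)..X, F p = (ℓ : ℝ) * ∑ i, w i * x i := by
    rw [hF]
    rw [intervalIntegral.integral_finset_sum (fun t _ => ?_)]
    · rw [Finset.sum_congr rfl (fun t _ => hIntShift t), Finset.sum_const,
        Finset.card_range, nsmul_eq_mul]
    · rw [intervalIntegrable_iff]
      exact integ _ B ((hgm.comp hcm).comp (measurable_id.add_const _))
        (fun y => hg0 _) (fun y => hgB _) _ huIoc
  -- ℓ/X > 1/2
  have h2 : (⌊X⌋₊:ℝ) ≤ (ℓ:ℝ) := by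
    have : ⌊X⌋₊ ≤ ℓ := hℓ ▸ le_max_right 1 ⌊X⌋₊
    exact_mod_cast this
  have h3 : (1:ℝ) ≤ (ℓ:ℝ) := by
    have : 1 ≤ ℓ := hℓ ▸ le_max_left 1 ⌊X⌋₊
    exact_mod_cast this
  have hhalf : (1/2 : ℝ) < (ℓ:ℝ)/X := by
    rw [lt_div_iff₀ hXpos]
    have h1 : X < (⌊X⌋₊ : ℝ) + 1 := Nat.lt_floor_add_one X
    linarith
  -- averaging: find a good offset
  have hmain : ∃ p : ℝ, 0 ≤ p ∧ p < X ∧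
      (ℓ:ℝ)/X * (∑ i, w i * x i) ≤ ∑ i ∈ univ.filter (fun i : Fin k => ∃ t ∈ Finset.range ℓ,
        S i ≤ cyclicMod X (p + t) ∧ cyclicMod X (p + t) < S i + x i), w i := by
    by_contra hcon
    push_neg at hcon
    set c : ℝ := (ℓ:ℝ)/X * (∑ i, w i * x i) with hc
    have hFlt : ∀ p ∈ Set.Ico (0:ℝ) X, F p < c := fun p hp =>
      lt_of_le_of_lt (hFle p) (hcon p hp.1 hp.2)
    have hFIco : ∫ p in Set.Ico (0:ℝ) X, F p = (ℓ:ℝ) * ∑ i, w i * x i := by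
      rw [integral_Ico_eq_integral_Ioo, ← integral_Ioc_eq_integral_Ioo,
        ← intervalIntegral.integral_of_le hXpos.le]
      exact hFint
    have hFbound : ∀ p, F p ≤ (ℓ:ℝ) * B := by
      intro p
      rw [hF]
      dsimp only
      calc ∑ t ∈ Finset.range ℓ, g (cyclicMod X (p + t)) ≤ ∑ _t ∈ Finset.range ℓ, B :=
            Finset.sum_le_sum fun t _ => hgB _
        _ = (ℓ:ℝ) * B := by rw [Finset.sum_const, Finset.card_range, nsmul_eq_mul]
    have hF0 : ∀ p, 0 ≤ F p := fun p => by
      rw [hF]; exact Finset.sum_nonneg fun t _ => hg0 _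
    have hIcoTop : volume (Set.Ico (0:ℝ) X) ≠ ⊤ := measure_Ico_lt_top.ne
    have hFon : IntegrableOn F (Set.Ico (0:ℝ) X) := integ F ((ℓ:ℝ) * B) hFm hF0 hFbound _ hIcoTop
    have hDon : Integrable (fun p => c - F p) (volume.restrict (Set.Ico (0:ℝ) X)) :=
      (integrable_const c).sub hFon
    have hD0 : 0 ≤ᵐ[volume.restrict (Set.Ico (0:ℝ) X)] (fun p => c - F p) := by
      rw [Filter.EventuallyLE, ae_restrict_iff' measurableSet_Ico]
      refine ae_of_all _ fun p hp => ?_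
      have := hFlt p hp
      simp only [Pi.zero_apply]
      linarith
    have hDzero : ∫ p in Set.Ico (0:ℝ) X, (c - F p) = 0 := by
      rw [integral_sub (integrable_const c) hFon, setIntegral_const, hFIco,
        Real.volume_real_Ico_of_le hXpos.le, smul_eq_mul, sub_zero, hc]
      field_simp
      ring
    have hae := (integral_eq_zero_iff_of_nonneg_ae hD0 hDon).1 hDzero
    rw [Filter.EventuallyEq, ae_iff] at hae
    have hsub : Set.Ico (0:ℝ) X ⊆ {p | ¬ (fun p => c - F p) p = (0 : ℝ → ℝ) p} := by
      intro p hp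
      have := hFlt p hp
      simp only [Set.mem_setOf_eq, Pi.zero_apply]
      intro h
      linarith
    have h1 : volume.restrict (Set.Ico (0:ℝ) X) (Set.Ico (0:ℝ) X) = 0 :=
      measure_mono_null hsub hae
    rw [Measure.restrict_apply_self, Real.volume_Ico, sub_zero] at h1
    exact absurd (ENNReal.ofReal_eq_zero.1 h1) (not_le.2 hXpos)
  obtain ⟨p, hp0, hpX, hpw⟩ := hmain
  refine ⟨p, univ.filter (fun i : Fin k => ∃ t ∈ Finset.range ℓ,
      S i ≤ cyclicMod X (p + t) ∧ cyclicMod X (p + t) < S i + x i),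
    hp0, hpX, ?_, ?_, hhalf, hpw⟩
  · intro i
    simp only [Finset.mem_filter, Finset.mem_univ, true_and]
  · intro i hi j hj hij z
    rw [Finset.mem_filter] at hi hj
    exact hconf p i j hi.2 hj.2 hij z
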